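/- Let P be the Markov kernel of the random walk on a weighted graph whose Cheeger constant is at least i (i.e., |∂S| ≥ i|S| for all finite vertex sets S). Then the operator norm of P on L²(V, w) satisfies ‖P‖ ≤ (1 − i²)^{1/2} ≤ 1 − i²/2. -/

import Mathlib

open scoped BigOperators Classical
open Filter MeasureTheory

variable {V : Type*}

/-- Vertex weight: sum of incident edge weights. -/
noncomputable def vtxWeight (w : V → V → ℝ) (v : V) : ℝ := ∑' u, w v u

/-- Volume of a finite vertex set. -/
noncomputable def vol (w : V → V → ℝ) (S : Finset V) : ℝ := ∑ v ∈ S, vtxWeight w v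

/-- Volume of the edge boundary of a finite vertex set. -/
noncomputable def bdry (w : V → V → ℝ) (S : Finset V) : ℝ :=
  ∑ v ∈ S, ∑' u, ((↑S : Set V)ᶜ).indicator (w v) u

/-- The `i`-isolation `Δ_i S = i|S| - |∂S|`. -/
noncomputable def isol (i : ℝ) (w : V → V → ℝ) (S : Finset V) : ℝ :=
  i * vol w S - bdry w S

/-- An `i`-isolated core: `Δ_i` strictly dominates `Δ_i` of every proper subset. -/
def IsCore (i : ℝ) (w : V → V → ℝ) (S : Finset V) : Prop :=
  ∀ A : Finset V, A ⊂ S → isol i w A < isol i w S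

/-- The union `A_i` of all `i`-isolated cores. -/
def coreUnion (i : ℝ) (w : V → V → ℝ) : Set V :=
  {v | ∃ S : Finset V, IsCore i w S ∧ v ∈ S}

/-- The underlying graph of a weighted graph: adjacency iff positive weight. -/
noncomputable def gra (w : V → V → ℝ) : SimpleGraph V :=
  SimpleGraph.fromRel (fun u v => 0 < w u v)

/-- A set of vertices is connected if its induced subgraph is connected. -/
def ConnSet (w : V → V → ℝ) (S : Set V) : Prop :=
  (SimpleGraph.induce S (gra w)).Connected

/-- `i`-anchored expansion: every vertex lies in only finitely many connected
finite vertex sets with positive `i`-isolation. -/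
def Anchored (i : ℝ) (w : V → V → ℝ) : Prop :=
  ∀ v : V, {S : Finset V | v ∈ S ∧ ConnSet w (↑S) ∧ 0 < isol i w S}.Finite

/-- An `i`-island: a connected component of `A_i`. -/
def IsIsland (i : ℝ) (w : V → V → ℝ) (C : Set V) : Prop :=
  C.Nonempty ∧ C ⊆ coreUnion i w ∧ ConnSet w C ∧
    ∀ C' : Set V, C ⊆ C' → C' ⊆ coreUnion i w → ConnSet w C' → C' = C

/-- Transition kernel of the random walk on the weighted graph. -/
noncomputable def markov (w : V → V → ℝ) (u v : V) : ℝ := w u v / vtxWeight w u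

/-- `n`-step transition kernel of a Markov kernel `p`. -/
noncomputable def kern (p : V → V → ℝ) : ℕ → V → V → ℝ
  | 0, x, y => if x = y then 1 else 0
  | n + 1, x, y => ∑' z, p x z * kern p n z y

lemma coarea (w : V → V → ℝ) (hnn : ∀ u v, 0 ≤ w u v) (hsum : ∀ v, Summable (w v))
    (i : ℝ) (hcheeger : ∀ S : Finset V, i * vol w S ≤ bdry w S)
    (s : Finset V) : ∀ (h : V → ℝ), (∀ v, 0 ≤ h v) → (∀ v, h v ≠ 0 → v ∈ s) →
      i * ∑ v ∈ s, h v * vtxWeight w v ≤ ∑ v ∈ s, ∑' u, w v u * max (h v - h u) 0 := by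
  induction s using Finset.strongInduction with
  | _ s IH =>
  intro h h0 hsupp
  have hterm_nonneg : ∀ (h' : V → ℝ) v, (0:ℝ) ≤ ∑' u, w v u * max (h' v - h' u) 0 :=
    fun h' v => tsum_nonneg fun u => mul_nonneg (hnn v u) (le_max_right _ _)
  by_cases hz : ∃ v ∈ s, h v = 0
  · obtain ⟨v0, hv0s, hv00⟩ := hz
    have hsub : s.erase v0 ⊂ s := Finset.erase_ssubset hv0s
    have hsupp' : ∀ v, h v ≠ 0 → v ∈ s.erase v0 := fun v hv =>
      Finset.mem_erase.2 ⟨fun e => hv (e ▸ hv00), hsupp v hv⟩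
    have key := IH _ hsub h h0 hsupp'
    have hL : ∑ v ∈ s.erase v0, h v * vtxWeight w v = ∑ v ∈ s, h v * vtxWeight w v :=
      Finset.sum_erase s (by rw [hv00, zero_mul])
    have hR : ∑ v ∈ s.erase v0, ∑' u, w v u * max (h v - h u) 0
        ≤ ∑ v ∈ s, ∑' u, w v u * max (h v - h u) 0 :=
      Finset.sum_le_sum_of_subset_of_nonneg (Finset.erase_subset _ _)
        (fun v _ _ => hterm_nonneg h v)
    rw [← hL]; exact key.trans hR
  · push_neg at hz
    rcases Finset.eq_empty_or_nonempty s with rfl | hse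
    · simp
    set m := s.inf' hse h with hm
    have hmpos : 0 < m := by
      rw [hm, Finset.lt_inf'_iff]
      exact fun v hv => lt_of_le_of_ne (h0 v) (Ne.symm (hz v hv))
    obtain ⟨v0, hv0s, hv0⟩ := Finset.exists_mem_eq_inf' hse h
    set h' : V → ℝ := fun v => if v ∈ s then h v - m else 0 with hh'
    have h'0 : ∀ v, 0 ≤ h' v := by
      intro v; by_cases hv : v ∈ s
      · simp only [hh', if_pos hv, sub_nonneg]; exact Finset.inf'_le h hv
      · simp [hh', hv]
    have h'supp : ∀ v, h' v ≠ 0 → v ∈ s.erase v0 := by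
      intro v hv
      by_cases hvs : v ∈ s
      · refine Finset.mem_erase.2 ⟨?_, hvs⟩
        rintro rfl
        simp only [hh', if_pos hvs, ← hv0] at hv
        exact hv (sub_self m)
      · simp [hh', hvs] at hv
    have hsub : s.erase v0 ⊂ s := Finset.erase_ssubset hv0s
    have key := IH _ hsub h' h'0 h'supp
    -- summabilities
    have S1 : ∀ v, Summable (fun u => w v u * max (h' v - h' u) 0) := by
      intro v
      refine Summable.of_nonneg_of_le (fun u => mul_nonneg (hnn v u) (le_max_right _ _))
        (fun u => ?_) ((hsum v).mul_right (h' v))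
      have : max (h' v - h' u) 0 ≤ h' v := max_le (by linarith [h'0 u]) (h'0 v)
      exact mul_le_mul_of_nonneg_left this (hnn v u)
    have S2 : ∀ v, Summable (fun u => ((↑s : Set V)ᶜ).indicator (w v) u) := by
      intro v
      refine Summable.of_nonneg_of_le (fun u => ?_) (fun u => ?_) (hsum v)
      · by_cases hu : u ∈ (↑s : Set V)ᶜ <;>
          simp [Set.indicator_of_mem, Set.indicator_of_notMem, hu, hnn v u]
      · by_cases hu : u ∈ (↑s : Set V)ᶜ <;>
          simp [Set.indicator_of_mem, Set.indicator_of_notMem, hu, hnn v u]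
    -- pointwise identity
    have hpt : ∀ v ∈ s, ∀ u, w v u * max (h v - h u) 0
        = w v u * max (h' v - h' u) 0 + m * ((↑s : Set V)ᶜ).indicator (w v) u := by
      intro v hv u
      by_cases hu : u ∈ s
      · have hind : ((↑s : Set V)ᶜ).indicator (w v) u = 0 :=
          Set.indicator_of_notMem (by simpa using hu) _
        simp only [hh', if_pos hv, if_pos hu, hind, mul_zero, add_zero]
        ring_nf
      · have hu0 : h u = 0 := by by_contra hc; exact hu (hsupp u hc)
        have hind : ((↑s : Set V)ᶜ).indicator (w v) u = w v u :=
          Set.indicator_of_mem (by simpa using hu) _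
        have h'v : h' v = h v - m := by simp [hh', hv]
        have h'u : h' u = 0 := by simp [hh', hu]
        have hmax1 : max (h v - h u) 0 = h v := by
          rw [hu0, sub_zero]; exact max_eq_left (h0 v)
        have hmax2 : max (h' v - h' u) 0 = h v - m := by
          rw [h'u, sub_zero, h'v]
          refine max_eq_left ?_
          rw [← h'v]; exact h'0 v
        rw [hmax1, hmax2, hind]; ring
    -- tsum identity per v ∈ s
    have htsum : ∀ v ∈ s, ∑' u, w v u * max (h v - h u) 0
        = (∑' u, w v u * max (h' v - h' u) 0)
          + m * ∑' u, ((↑s : Set V)ᶜ).indicator (w v) u := by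
      intro v hv
      rw [tsum_congr (fun u => hpt v hv u), Summable.tsum_add (S1 v) (((S2 v).mul_left m)), tsum_mul_left]
    have hRHS : ∑ v ∈ s, ∑' u, w v u * max (h v - h u) 0
        = (∑ v ∈ s, ∑' u, w v u * max (h' v - h' u) 0) + m * bdry w s := by
      rw [Finset.sum_congr rfl htsum, Finset.sum_add_distrib, ← Finset.mul_sum, bdry]
    have hLHS : ∑ v ∈ s, h v * vtxWeight w v
        = (∑ v ∈ s, h' v * vtxWeight w v) + m * vol w s := by
      rw [vol, Finset.mul_sum, ← Finset.sum_add_distrib]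
      refine Finset.sum_congr rfl fun v hv => ?_
      simp only [hh', if_pos hv]; ring
    have hstep1 : ∑ v ∈ s.erase v0, h' v * vtxWeight w v = ∑ v ∈ s, h' v * vtxWeight w v :=
      Finset.sum_erase s (by simp [hh', hv0s, ← hv0, ← hm])
    have hstep2 : ∑ v ∈ s.erase v0, ∑' u, w v u * max (h' v - h' u) 0
        ≤ ∑ v ∈ s, ∑' u, w v u * max (h' v - h' u) 0 :=
      Finset.sum_le_sum_of_subset_of_nonneg (Finset.erase_subset _ _)
        (fun v _ _ => hterm_nonneg h' v)
    have hcheeg := hcheeger s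
    have : m * (i * vol w s) ≤ m * bdry w s :=
      mul_le_mul_of_nonneg_left hcheeg (le_of_lt hmpos)
    rw [hLHS, hRHS]
    rw [← hstep1] at *
    nlinarith [key, hstep2]

lemma col_summable (w : V → V → ℝ) (hsymm : ∀ u v, w u v = w v u)
    (hsum : ∀ v, Summable (w v)) (u : V) : Summable (fun v => w v u) :=
  (hsum u).congr (fun v => hsymm u v)

/-- master summability on the product -/
lemma master_summable (w : V → V → ℝ) (hsymm : ∀ u v, w u v = w v u)
    (hnn : ∀ u v, 0 ≤ w u v) (hsum : ∀ v, Summable (w v)) (s : Finset V) (C : ℝ) (hC : 0 ≤ C) :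
    Summable (fun p : V × V =>
      w p.1 p.2 * ((if p.1 ∈ s then C else 0) + (if p.2 ∈ s then C else 0))) := by
  set b : V → ℝ := fun v => if v ∈ s then C else 0 with hb
  have hb0 : ∀ v, 0 ≤ b v := fun v => by by_cases hv : v ∈ s <;> simp [hb, hv, hC]
  have hbC : ∀ v, b v ≤ C := fun v => by by_cases hv : v ∈ s <;> simp [hb, hv, hC]
  rw [summable_prod_of_nonneg]
  · constructor
    · intro v
      refine Summable.of_nonneg_of_le
        (fun u => mul_nonneg (hnn v u) (add_nonneg (hb0 v) (hb0 u))) (fun u => ?_)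
        ((hsum v).mul_right (b v + C))
      exact mul_le_mul_of_nonneg_left (by linarith [hbC u]) (hnn v u)
    · have hrow : ∀ v, ∑' u, w v u * (b v + b u)
          = b v * vtxWeight w v + ∑ u ∈ s, w v u * b u := by
        intro v
        have e1 : ∀ u, w v u * (b v + b u) = b v * w v u + w v u * b u := fun u => by ring
        have s2 : Summable (fun u => w v u * b u) :=
          summable_of_ne_finset_zero (s := s) (fun u hu => by simp [hb, if_neg hu])
        have e2 : ∑' u, w v u * b u = ∑ u ∈ s, w v u * b u :=
          tsum_eq_sum (fun u hu => by simp [hb, if_neg hu])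
        rw [tsum_congr e1, Summable.tsum_add ((hsum v).mul_left (b v)) s2, tsum_mul_left, e2, vtxWeight]
      refine Summable.congr ?_ (fun v => (hrow v).symm)
      refine Summable.add ?_ ?_
      · exact summable_of_ne_finset_zero (s := s) (fun v hv => by simp [hb, if_neg hv])
      · exact summable_sum (fun u _ => ((col_summable w hsymm hsum u).mul_right (b u)))
  · intro p
    exact mul_nonneg (hnn p.1 p.2) (add_nonneg (hb0 p.1) (hb0 p.2))

lemma expand_sq (w : V → V → ℝ) (hsymm : ∀ u v, w u v = w v u) (hnn : ∀ u v, 0 ≤ w u v)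
    (hsum : ∀ v, Summable (w v)) (s : Finset V) (g : V → ℝ)
    (hg0 : ∀ v, 0 ≤ g v) (hgs : ∀ v, g v ≠ 0 → v ∈ s) (ε : ℝ) :
    Summable (fun p : V × V => w p.1 p.2 * (g p.1 + ε * g p.2) ^ 2) ∧
    ∑' (p : V × V), w p.1 p.2 * (g p.1 + ε * g p.2) ^ 2
      = (1 + ε ^ 2) * (∑ v ∈ s, g v ^ 2 * vtxWeight w v)
        + 2 * ε * ∑ v ∈ s, ∑ u ∈ s, w v u * g u * g v := by
  set M : ℝ := ∑ v ∈ s, g v with hM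
  have hM0 : 0 ≤ M := Finset.sum_nonneg (fun v _ => hg0 v)
  have hgM : ∀ v, g v ≤ M := by
    intro v
    by_cases hv : v ∈ s
    · exact Finset.single_le_sum (fun x _ => hg0 x) hv
    · have : g v = 0 := by by_contra hc; exact hv (hgs v hc)
      rw [this]; exact hM0
  have hgz : ∀ v, v ∉ s → g v = 0 := fun v hv => by by_contra hc; exact hv (hgs v hc)
  set C : ℝ := 2 * (1 + ε ^ 2) * M ^ 2 with hC
  have hC0 : 0 ≤ C := by positivity
  have hsummable : Summable (fun p : V × V => w p.1 p.2 * (g p.1 + ε * g p.2) ^ 2) := by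
    refine Summable.of_nonneg_of_le (fun p => mul_nonneg (hnn p.1 p.2) (sq_nonneg _))
      (fun p => ?_) (master_summable w hsymm hnn hsum s C hC0)
    refine mul_le_mul_of_nonneg_left ?_ (hnn p.1 p.2)
    have key : ∀ a b : ℝ, 0 ≤ a → a ≤ M → 0 ≤ b → b ≤ M → (a + ε * b) ^ 2 ≤ C := by
      intro a b ha haM hb hbM
      have k1 : a ^ 2 ≤ M ^ 2 := by nlinarith
      have k2 : b ^ 2 ≤ M ^ 2 := by nlinarith
      have k3 : ε ^ 2 * b ^ 2 ≤ ε ^ 2 * M ^ 2 := mul_le_mul_of_nonneg_left k2 (sq_nonneg ε)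
      rw [hC]; nlinarith [sq_nonneg (a - ε * b)]
    have hite2 : (0:ℝ) ≤ (if p.2 ∈ s then C else 0) := by
      by_cases h2 : p.2 ∈ s <;> simp [h2, hC0]
    have hite1 : (0:ℝ) ≤ (if p.1 ∈ s then C else 0) := by
      by_cases h1 : p.1 ∈ s <;> simp [h1, hC0]
    have hkey := key (g p.1) (g p.2) (hg0 p.1) (hgM p.1) (hg0 p.2) (hgM p.2)
    by_cases h1 : p.1 ∈ s
    · rw [if_pos h1]; linarith
    · by_cases h2 : p.2 ∈ s
      · rw [if_neg h1, if_pos h2]; linarith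
      · rw [if_neg h1, if_neg h2, hgz p.1 h1, hgz p.2 h2]; simp
  refine ⟨hsummable, ?_⟩
  have hrow : ∀ v, Summable (fun u => w v u * (g v + ε * g u) ^ 2) := by
    intro v
    exact (summable_prod_of_nonneg
      (fun p => mul_nonneg (hnn p.1 p.2) (sq_nonneg _))).1 hsummable |>.1 v
  rw [Summable.tsum_prod' hsummable hrow]
  -- inner expansion
  have hinner : ∀ v, ∑' u, w v u * (g v + ε * g u) ^ 2
      = g v ^ 2 * vtxWeight w v + (2 * ε * g v) * (∑ u ∈ s, w v u * g u)
        + ε ^ 2 * ∑ u ∈ s, w v u * g u ^ 2 := by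
    intro v
    have e1 : ∀ u, w v u * (g v + ε * g u) ^ 2
        = g v ^ 2 * w v u + ((2 * ε * g v) * (w v u * g u) + ε ^ 2 * (w v u * g u ^ 2)) := by
      intro u; ring
    have s1 : Summable (fun u => g v ^ 2 * w v u) := (hsum v).mul_left _
    have s2 : Summable (fun u => (2 * ε * g v) * (w v u * g u)) := by
      refine Summable.mul_left _ (summable_of_ne_finset_zero (s := s) fun u hu => ?_)
      rw [hgz u hu, mul_zero]
    have s3 : Summable (fun u => ε ^ 2 * (w v u * g u ^ 2)) := by
      refine Summable.mul_left _ (summable_of_ne_finset_zero (s := s) fun u hu => ?_)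
      rw [hgz u hu]; ring
    rw [tsum_congr e1, Summable.tsum_add s1 (s2.add s3), Summable.tsum_add s2 s3, tsum_mul_left, tsum_mul_left,
      tsum_mul_left]
    have e2 : ∑' u, w v u * g u = ∑ u ∈ s, w v u * g u :=
      tsum_eq_sum (fun u hu => by rw [hgz u hu, mul_zero])
    have e3 : ∑' u, w v u * g u ^ 2 = ∑ u ∈ s, w v u * g u ^ 2 :=
      tsum_eq_sum (fun u hu => by rw [hgz u hu]; ring)
    rw [e2, e3, vtxWeight]
    ring
  rw [tsum_congr hinner]
  -- outer sum
  have o1 : Summable (fun v => g v ^ 2 * vtxWeight w v) :=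
    summable_of_ne_finset_zero (s := s) (fun v hv => by rw [hgz v hv]; ring)
  have o2 : Summable (fun v => (2 * ε * g v) * (∑ u ∈ s, w v u * g u)) :=
    summable_of_ne_finset_zero (s := s) (fun v hv => by rw [hgz v hv]; ring)
  have o3 : Summable (fun v => ε ^ 2 * ∑ u ∈ s, w v u * g u ^ 2) := by
    refine Summable.mul_left _ ?_
    exact summable_sum (fun u _ => ((col_summable w hsymm hsum u).mul_right (g u ^ 2)))
  rw [Summable.tsum_add (o1.add o2) o3, Summable.tsum_add o1 o2]
  have v1 : ∑' v, g v ^ 2 * vtxWeight w v = ∑ v ∈ s, g v ^ 2 * vtxWeight w v :=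
    tsum_eq_sum (fun v hv => by rw [hgz v hv]; ring)
  have v2 : ∑' v, (2 * ε * g v) * (∑ u ∈ s, w v u * g u)
      = 2 * ε * ∑ v ∈ s, ∑ u ∈ s, w v u * g u * g v := by
    rw [tsum_eq_sum (s := s) (fun v hv => by rw [hgz v hv]; ring), Finset.mul_sum]
    refine Finset.sum_congr rfl fun v _ => ?_
    rw [Finset.mul_sum, Finset.mul_sum]
    exact Finset.sum_congr rfl fun u _ => by ring
  have v3 : ∑' v, ε ^ 2 * ∑ u ∈ s, w v u * g u ^ 2
      = ε ^ 2 * ∑ v ∈ s, g v ^ 2 * vtxWeight w v := by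
    rw [tsum_mul_left]
    congr 1
    rw [Summable.tsum_finsetSum (fun u _ => ((col_summable w hsymm hsum u).mul_right (g u ^ 2)))]
    have : ∀ u ∈ s, ∑' v, w v u * g u ^ 2 = g u ^ 2 * vtxWeight w u := by
      intro u _
      rw [tsum_mul_right]
      have : ∑' v, w v u = vtxWeight w u := by
        rw [vtxWeight]; exact tsum_congr (fun v => hsymm v u)
      rw [this]; ring
    rw [Finset.sum_congr rfl this]
  rw [v1, v2, v3]
  ring

lemma tsum_CS {a b : V → ℝ} (ha : ∀ v, 0 ≤ a v) (hb : ∀ v, 0 ≤ b v)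
    (ha2 : Summable (fun v => a v ^ 2)) (hb2 : Summable (fun v => b v ^ 2)) :
    ∑' v, a v * b v ≤ Real.sqrt (∑' v, a v ^ 2) * Real.sqrt (∑' v, b v ^ 2) := by
  have hs : Summable (fun v => a v * b v) := by
    refine Summable.of_nonneg_of_le (fun v => mul_nonneg (ha v) (hb v)) (fun v => ?_)
      ((ha2.add hb2).div_const 2)
    nlinarith [sq_nonneg (a v - b v)]
  refine Summable.tsum_le_of_sum_le hs fun s => ?_
  calc ∑ v ∈ s, a v * b v
      ≤ Real.sqrt (∑ v ∈ s, a v ^ 2) * Real.sqrt (∑ v ∈ s, b v ^ 2) :=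
        Real.sum_mul_le_sqrt_mul_sqrt s a b
    _ ≤ _ := by
        gcongr
        · exact Summable.sum_le_tsum s (fun v _ => sq_nonneg _) ha2
        · exact Summable.sum_le_tsum s (fun v _ => sq_nonneg _) hb2

lemma max_sq_add (a : ℝ) : max a 0 ^ 2 + max (-a) 0 ^ 2 = a ^ 2 := by
  rcases le_total a 0 with h | h
  · rw [max_eq_right h, max_eq_left (by linarith)]; ring
  · rw [max_eq_left h, max_eq_right (by linarith)]; ring

set_option maxHeartbeats 1600000 in
lemma quad_bound (w : V → V → ℝ) (hsymm : ∀ u v, w u v = w v u) (hnn : ∀ u v, 0 ≤ w u v)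
    (hsum : ∀ v, Summable (w v)) (i : ℝ) (hi0 : 0 < i) (hi1 : i ≤ 1)
    (hcoarea : ∀ (s : Finset V) (h : V → ℝ), (∀ v, 0 ≤ h v) → (∀ v, h v ≠ 0 → v ∈ s) →
      i * ∑ v ∈ s, h v * vtxWeight w v ≤ ∑ v ∈ s, ∑' u, w v u * max (h v - h u) 0)
    (s : Finset V) (f : V → ℝ) (hsupp : ∀ v, f v ≠ 0 → v ∈ s) :
    |∑ v ∈ s, ∑ u ∈ s, w v u * f u * f v|
      ≤ Real.sqrt (1 - i ^ 2) * ∑ v ∈ s, f v ^ 2 * vtxWeight w v := by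
  set g : V → ℝ := fun v => |f v| with hgdef
  have hg0 : ∀ v, 0 ≤ g v := fun v => abs_nonneg _
  have hgs : ∀ v, g v ≠ 0 → v ∈ s := fun v hv => hsupp v (fun hc => hv (by simp [hgdef, hc]))
  have hgz : ∀ v, v ∉ s → g v = 0 := fun v hv => by by_contra hc; exact hv (hgs v hc)
  have hgsq : ∀ v, g v ^ 2 = f v ^ 2 := fun v => sq_abs _
  set N : ℝ := ∑ v ∈ s, g v ^ 2 * vtxWeight w v with hNdef
  set Ag : ℝ := ∑ v ∈ s, ∑ u ∈ s, w v u * g u * g v with hAgdef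
  have hd0 : ∀ v, 0 ≤ vtxWeight w v := fun v => tsum_nonneg (fun u => hnn v u)
  have hN0 : 0 ≤ N := Finset.sum_nonneg fun v _ => mul_nonneg (sq_nonneg _) (hd0 v)
  have hAg0 : 0 ≤ Ag := Finset.sum_nonneg fun v _ => Finset.sum_nonneg fun u _ =>
    mul_nonneg (mul_nonneg (hnn v u) (hg0 u)) (hg0 v)
  set M : ℝ := ∑ v ∈ s, g v with hM
  have hM0 : 0 ≤ M := Finset.sum_nonneg (fun v _ => hg0 v)
  have hgM : ∀ v, g v ≤ M := by
    intro v
    by_cases hv : v ∈ s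
    · exact Finset.single_le_sum (fun x _ => hg0 x) hv
    · rw [hgz v hv]; exact hM0
  -- the three integrands
  set F1 : V × V → ℝ := fun p => w p.1 p.2 * max (g p.1 - g p.2) 0 ^ 2 with hF1
  set F2 : V × V → ℝ := fun p =>
    w p.1 p.2 * (if g p.2 < g p.1 then (g p.1 + g p.2) ^ 2 else 0) with hF2
  set F0 : V × V → ℝ := fun p => w p.1 p.2 * max (g p.1 ^ 2 - g p.2 ^ 2) 0 with hF0
  have hF1nn : ∀ p, 0 ≤ F1 p := fun p => mul_nonneg (hnn _ _) (sq_nonneg _)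
  have hF2nn : ∀ p, 0 ≤ F2 p := fun p => mul_nonneg (hnn _ _) (by positivity)
  have hF0nn : ∀ p, 0 ≤ F0 p := fun p => mul_nonneg (hnn _ _) (le_max_right _ _)
  -- summability via master
  have hmaster := master_summable w hsymm hnn hsum s (4 * M ^ 2) (by positivity)
  have hdom : ∀ (F : V × V → ℝ), (∀ p, 0 ≤ F p) →
      (∀ p, F p ≤ w p.1 p.2 * ((if p.1 ∈ s then 4 * M ^ 2 else 0)
        + (if p.2 ∈ s then 4 * M ^ 2 else 0))) → Summable F :=
    fun F h0 hle => Summable.of_nonneg_of_le h0 hle hmaster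
  have hbnd : ∀ p : V × V, ∀ x : ℝ, 0 ≤ x → (g p.1 ≠ 0 → x ≤ 4 * M ^ 2) → (g p.1 = 0 → x = 0) →
      w p.1 p.2 * x ≤ w p.1 p.2 * ((if p.1 ∈ s then 4 * M ^ 2 else 0)
        + (if p.2 ∈ s then 4 * M ^ 2 else 0)) := by
    intro p x hx h1 h2
    have hite2 : (0:ℝ) ≤ (if p.2 ∈ s then 4 * M ^ 2 else 0) := by positivity
    by_cases hg1 : g p.1 = 0
    · rw [h2 hg1, mul_zero]
      exact mul_nonneg (hnn _ _) (by positivity)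
    · rw [if_pos (hgs _ hg1)]
      exact mul_le_mul_of_nonneg_left (by linarith [h1 hg1]) (hnn _ _)
  have hS1 : Summable F1 := by
    refine hdom F1 hF1nn fun p => hbnd p _ (sq_nonneg _) (fun _ => ?_) (fun hz => ?_)
    · have h1 : max (g p.1 - g p.2) 0 ≤ g p.1 := max_le (by linarith [hg0 p.2]) (hg0 p.1)
      have h2 : max (g p.1 - g p.2) 0 ^ 2 ≤ g p.1 ^ 2 := by
        nlinarith [le_max_right (g p.1 - g p.2) (0:ℝ)]
      nlinarith [hgM p.1, hg0 p.1]
    · rw [hz]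
      rw [max_eq_right (by linarith [hg0 p.2])]
      ring
  have hS2 : Summable F2 := by
    refine hdom F2 hF2nn fun p => hbnd p _ (by positivity) (fun _ => ?_) (fun hz => ?_)
    · by_cases hlt : g p.2 < g p.1
      · rw [if_pos hlt]
        nlinarith [hgM p.1, hgM p.2, hg0 p.1, hg0 p.2]
      · rw [if_neg hlt]; positivity
    · rw [if_neg (by rw [hz]; exact fun hc => absurd hc (not_lt.2 (hg0 p.2)))]
  have hS0 : Summable F0 := by
    refine hdom F0 hF0nn fun p => hbnd p _ (le_max_right _ _) (fun _ => ?_) (fun hz => ?_)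
    · have : max (g p.1 ^ 2 - g p.2 ^ 2) 0 ≤ g p.1 ^ 2 :=
        max_le (by nlinarith [sq_nonneg (g p.2)]) (sq_nonneg _)
      nlinarith [hgM p.1, hg0 p.1]
    · rw [hz, max_eq_right (by nlinarith [sq_nonneg (g p.2)])]
  -- swap machinery
  have hswap : ∀ (F : V × V → ℝ), Summable F →
      (Summable (fun p : V × V => F (p.2, p.1)) ∧
        ∑' p : V × V, F (p.2, p.1) = ∑' p, F p) := by
    intro F hF
    have he : (fun p : V × V => F (p.2, p.1)) = F ∘ (Equiv.prodComm V V) := rfl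
    constructor
    · rw [he]; exact ((Equiv.prodComm V V).summable_iff).2 hF
    · rw [he]; exact (Equiv.prodComm V V).tsum_eq F
  set QA : ℝ := ∑' p, F1 p with hQAdef
  set QB : ℝ := ∑' p, F2 p with hQBdef
  set E : ℝ := ∑' p, F0 p with hEdef
  have hQA0 : 0 ≤ QA := tsum_nonneg hF1nn
  have hQB0 : 0 ≤ QB := tsum_nonneg hF2nn
  -- QA = N - Ag
  have hexpm := expand_sq w hsymm hnn hsum s g hg0 hgs (-1)
  have hexpp := expand_sq w hsymm hnn hsum s g hg0 hgs 1
  have hQA : 2 * QA = 2 * N - 2 * Ag := by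
    have hps : ∀ p : V × V, F1 p + F1 (p.2, p.1) = w p.1 p.2 * (g p.1 + (-1) * g p.2) ^ 2 := by
      intro p
      simp only [hF1]
      rw [hsymm p.2 p.1]
      have : max (g p.2 - g p.1) 0 = max (-(g p.1 - g p.2)) 0 := by ring_nf
      rw [this, ← mul_add, max_sq_add]
      ring_nf
    have h1 := (hswap F1 hS1).1
    have h2 := (hswap F1 hS1).2
    calc 2 * QA = QA + QA := by ring
      _ = (∑' p, F1 p) + ∑' p : V × V, F1 (p.2, p.1) := by rw [hQAdef, h2]
      _ = ∑' p : V × V, (F1 p + F1 (p.2, p.1)) := (Summable.tsum_add hS1 h1).symm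
      _ = ∑' p : V × V, w p.1 p.2 * (g p.1 + (-1) * g p.2) ^ 2 := tsum_congr hps
      _ = (1 + (-1:ℝ) ^ 2) * N + 2 * (-1) * Ag := hexpm.2
      _ = 2 * N - 2 * Ag := by ring
  have hQB : 2 * QB ≤ 2 * N + 2 * Ag := by
    have hps : ∀ p : V × V, F2 p + F2 (p.2, p.1) ≤ w p.1 p.2 * (g p.1 + 1 * g p.2) ^ 2 := by
      intro p
      simp only [hF2]
      rw [hsymm p.2 p.1]
      rcases lt_trichotomy (g p.2) (g p.1) with hlt | heq | hgt
      · rw [if_pos hlt, if_neg (not_lt.2 (le_of_lt hlt)), mul_zero, add_zero]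
        refine mul_le_mul_of_nonneg_left (by nlinarith) (hnn _ _)
      · rw [if_neg (by rw [heq]; exact lt_irrefl _), if_neg (by rw [heq]; exact lt_irrefl _)]
        simp only [mul_zero, add_zero, zero_add]
        exact mul_nonneg (hnn _ _) (sq_nonneg _)
      · rw [if_neg (not_lt.2 (le_of_lt hgt)), if_pos hgt, mul_zero, zero_add]
        refine mul_le_mul_of_nonneg_left (by nlinarith) (hnn _ _)
    have h1 := (hswap F2 hS2).1
    have h2 := (hswap F2 hS2).2
    calc 2 * QB = (∑' p, F2 p) + ∑' p : V × V, F2 (p.2, p.1) := by rw [hQBdef, h2]; ring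
      _ = ∑' p : V × V, (F2 p + F2 (p.2, p.1)) := (Summable.tsum_add hS2 h1).symm
      _ ≤ ∑' p : V × V, w p.1 p.2 * (g p.1 + 1 * g p.2) ^ 2 :=
          Summable.tsum_le_tsum hps (hS2.add h1) hexpp.1
      _ = (1 + (1:ℝ) ^ 2) * N + 2 * 1 * Ag := hexpp.2
      _ = 2 * N + 2 * Ag := by ring
  -- coarea: i * N ≤ E
  have hiN : i * N ≤ E := by
    have hca := hcoarea s (fun v => g v ^ 2) (fun v => sq_nonneg _)
      (fun v hv => hgs v (fun hc => hv (by simp [hc])))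
    have hrows : ∀ v, Summable (fun u => F0 (v, u)) :=
      (summable_prod_of_nonneg hF0nn).1 hS0 |>.1
    have hE2 : E = ∑ v ∈ s, ∑' u, w v u * max (g v ^ 2 - g u ^ 2) 0 := by
      rw [hEdef, Summable.tsum_prod' hS0 hrows]
      exact tsum_eq_sum (fun v hv => by
        have : ∀ u, F0 (v, u) = 0 := by
          intro u
          simp only [hF0]
          rw [hgz v hv, max_eq_right (by nlinarith [sq_nonneg (g u)])]
          ring
        rw [tsum_congr this, tsum_zero])
    rw [hE2]
    exact hca
  -- Cauchy-Schwarz: E ≤ sqrt QA * sqrt QB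
  have hCS : E ≤ Real.sqrt QA * Real.sqrt QB := by
    have hpt : ∀ p : V × V, F0 p = Real.sqrt (F1 p) * Real.sqrt (F2 p) := by
      intro p
      simp only [hF0, hF1, hF2]
      by_cases hlt : g p.2 < g p.1
      · rw [if_pos hlt]
        rw [max_eq_left (by nlinarith [hg0 p.2] : (0:ℝ) ≤ g p.1 ^ 2 - g p.2 ^ 2),
          max_eq_left (by linarith : (0:ℝ) ≤ g p.1 - g p.2)]
        rw [Real.sqrt_mul (hnn _ _), Real.sqrt_mul (hnn _ _),
          Real.sqrt_sq (by linarith : (0:ℝ) ≤ g p.1 - g p.2),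
          Real.sqrt_sq (add_nonneg (hg0 p.1) (hg0 p.2))]
        have hw : Real.sqrt (w p.1 p.2) * Real.sqrt (w p.1 p.2) = w p.1 p.2 :=
          Real.mul_self_sqrt (hnn _ _)
        linear_combination (g p.2 ^ 2 - g p.1 ^ 2) * hw
      · rw [if_neg hlt, mul_zero, Real.sqrt_zero, mul_zero]
        have hle : g p.1 ≤ g p.2 := not_lt.1 hlt
        rw [max_eq_right (by nlinarith [hg0 p.1, hg0 p.2] : g p.1 ^ 2 - g p.2 ^ 2 ≤ 0)]
        ring
    have ha2 : Summable (fun p : V × V => Real.sqrt (F1 p) ^ 2) :=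
      hS1.congr (fun p => (Real.sq_sqrt (hF1nn p)).symm)
    have hb2 : Summable (fun p : V × V => Real.sqrt (F2 p) ^ 2) :=
      hS2.congr (fun p => (Real.sq_sqrt (hF2nn p)).symm)
    calc E = ∑' p, Real.sqrt (F1 p) * Real.sqrt (F2 p) := tsum_congr hpt
      _ ≤ Real.sqrt (∑' p, Real.sqrt (F1 p) ^ 2) * Real.sqrt (∑' p, Real.sqrt (F2 p) ^ 2) :=
          tsum_CS (fun p => Real.sqrt_nonneg _) (fun p => Real.sqrt_nonneg _) ha2 hb2
      _ = Real.sqrt QA * Real.sqrt QB := by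
          rw [tsum_congr (fun p => Real.sq_sqrt (hF1nn p)),
            tsum_congr (fun p => Real.sq_sqrt (hF2nn p))]
  -- assemble
  have h1i : (0:ℝ) ≤ 1 - i ^ 2 := by nlinarith
  have hAgN : Ag ≤ N := by linarith
  have hNAg : 0 ≤ N + Ag := by linarith
  have hsq : (i * N) ^ 2 ≤ QA * QB := by
    have hiN0 : 0 ≤ i * N := mul_nonneg (le_of_lt hi0) hN0
    have : (Real.sqrt QA * Real.sqrt QB) ^ 2 = QA * QB := by
      rw [mul_pow, Real.sq_sqrt hQA0, Real.sq_sqrt hQB0]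
    nlinarith [hiN.trans hCS]
  have hQAQB : QA * QB ≤ (N - Ag) * (N + Ag) := by
    have hQAv : QA = N - Ag := by linarith
    rw [hQAv]
    exact mul_le_mul_of_nonneg_left (by linarith) (by linarith)
  have hAg2 : Ag ^ 2 ≤ (1 - i ^ 2) * N ^ 2 := by nlinarith
  have hAgle : Ag ≤ Real.sqrt (1 - i ^ 2) * N := by
    have : Ag = Real.sqrt (Ag ^ 2) := (Real.sqrt_sq hAg0).symm
    rw [this]
    calc Real.sqrt (Ag ^ 2) ≤ Real.sqrt ((1 - i ^ 2) * N ^ 2) := Real.sqrt_le_sqrt hAg2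
      _ = Real.sqrt (1 - i ^ 2) * N := by rw [Real.sqrt_mul h1i, Real.sqrt_sq hN0]
  have hAbs : |∑ v ∈ s, ∑ u ∈ s, w v u * f u * f v| ≤ Ag := by
    calc |∑ v ∈ s, ∑ u ∈ s, w v u * f u * f v|
        ≤ ∑ v ∈ s, |∑ u ∈ s, w v u * f u * f v| := Finset.abs_sum_le_sum_abs _ _
      _ ≤ ∑ v ∈ s, ∑ u ∈ s, |w v u * f u * f v| :=
          Finset.sum_le_sum fun v _ => Finset.abs_sum_le_sum_abs _ _
      _ = Ag := by
          rw [hAgdef]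
          refine Finset.sum_congr rfl fun v _ => Finset.sum_congr rfl fun u _ => ?_
          rw [abs_mul, abs_mul, abs_of_nonneg (hnn v u)]
  have hNf : N = ∑ v ∈ s, f v ^ 2 * vtxWeight w v := by
    rw [hNdef]
    exact Finset.sum_congr rfl fun v _ => by rw [hgsq]
  rw [← hNf]
  exact hAbs.trans hAgle

set_option maxHeartbeats 800000 in
lemma bilinear_bound (w : V → V → ℝ) (hpos : ∀ v, 0 < vtxWeight w v)
    (c : ℝ) (hc : 0 ≤ c)
    (hquad : ∀ (s : Finset V) (h : V → ℝ), (∀ v, h v ≠ 0 → v ∈ s) →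
      |∑ v ∈ s, ∑ u ∈ s, w v u * h u * h v| ≤ c * ∑ v ∈ s, h v ^ 2 * vtxWeight w v)
    (hsymmB : ∀ (t : Finset V) (a b : V → ℝ),
      ∑ v ∈ t, ∑ u ∈ t, w v u * a u * b v = ∑ v ∈ t, ∑ u ∈ t, w v u * b u * a v)
    (t : Finset V) (f g : V → ℝ) (hf : ∀ v, f v ≠ 0 → v ∈ t) (hg : ∀ v, g v ≠ 0 → v ∈ t) :
    |∑ v ∈ t, ∑ u ∈ t, w v u * f u * g v|
      ≤ c * (Real.sqrt (∑ v ∈ t, f v ^ 2 * vtxWeight w v)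
          * Real.sqrt (∑ v ∈ t, g v ^ 2 * vtxWeight w v)) := by
  set d := vtxWeight w with hd
  set Nf : ℝ := ∑ v ∈ t, f v ^ 2 * d v with hNf
  set Ng : ℝ := ∑ v ∈ t, g v ^ 2 * d v with hNg
  have hd0 : ∀ v, 0 ≤ d v := fun v => le_of_lt (hpos v)
  have hNf0 : 0 ≤ Nf := Finset.sum_nonneg fun v _ => mul_nonneg (sq_nonneg _) (hd0 v)
  have hNg0 : 0 ≤ Ng := Finset.sum_nonneg fun v _ => mul_nonneg (sq_nonneg _) (hd0 v)
  by_cases hNfz : Nf = 0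
  · have hfz : ∀ v ∈ t, f v = 0 := by
      intro v hv
      have h0 : f v ^ 2 * d v = 0 := (Finset.sum_eq_zero_iff_of_nonneg
        (fun x _ => mul_nonneg (sq_nonneg (f x)) (hd0 x))).1 hNfz v hv
      rcases mul_eq_zero.1 h0 with h | h
      · exact pow_eq_zero_iff (n := 2) (by norm_num) |>.1 h
      · exact absurd h (ne_of_gt (hpos v))
    have hB0 : ∑ v ∈ t, ∑ u ∈ t, w v u * f u * g v = 0 :=
      Finset.sum_eq_zero fun v _ => Finset.sum_eq_zero fun u hu => by
        rw [hfz u hu]; ring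
    rw [hB0, abs_zero]
    positivity
  by_cases hNgz : Ng = 0
  · have hgz : ∀ v ∈ t, g v = 0 := by
      intro v hv
      have h0 : g v ^ 2 * d v = 0 := (Finset.sum_eq_zero_iff_of_nonneg
        (fun x _ => mul_nonneg (sq_nonneg (g x)) (hd0 x))).1 hNgz v hv
      rcases mul_eq_zero.1 h0 with h | h
      · exact pow_eq_zero_iff (n := 2) (by norm_num) |>.1 h
      · exact absurd h (ne_of_gt (hpos v))
    have hB0 : ∑ v ∈ t, ∑ u ∈ t, w v u * f u * g v = 0 :=
      Finset.sum_eq_zero fun v hv => Finset.sum_eq_zero fun u _ => by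
        rw [hgz v hv]; ring
    rw [hB0, abs_zero]
    positivity
  have hNfpos : 0 < Nf := lt_of_le_of_ne hNf0 (Ne.symm hNfz)
  have hNgpos : 0 < Ng := lt_of_le_of_ne hNg0 (Ne.symm hNgz)
  set sf := Real.sqrt Nf with hsf
  set sg := Real.sqrt Ng with hsg
  have hsfpos : 0 < sf := Real.sqrt_pos.2 hNfpos
  have hsgpos : 0 < sg := Real.sqrt_pos.2 hNgpos
  have hsf2 : sf ^ 2 = Nf := Real.sq_sqrt (le_of_lt hNfpos)
  have hsg2 : sg ^ 2 = Ng := Real.sq_sqrt (le_of_lt hNgpos)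
  set x := Real.sqrt (sg / sf) with hx
  have hxpos : 0 < x := Real.sqrt_pos.2 (div_pos hsgpos hsfpos)
  have hx2 : x ^ 2 = sg / sf := Real.sq_sqrt (le_of_lt (div_pos hsgpos hsfpos))
  set h1 : V → ℝ := fun v => x * f v + g v / x with hh1
  set h2 : V → ℝ := fun v => x * f v - g v / x with hh2
  have hh1s : ∀ v, h1 v ≠ 0 → v ∈ t := by
    intro v hv
    by_contra hvt
    have hfv : f v = 0 := by by_contra hc'; exact hvt (hf v hc')
    have hgv : g v = 0 := by by_contra hc'; exact hvt (hg v hc')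
    exact hv (by simp [hh1, hfv, hgv])
  have hh2s : ∀ v, h2 v ≠ 0 → v ∈ t := by
    intro v hv
    by_contra hvt
    have hfv : f v = 0 := by by_contra hc'; exact hvt (hf v hc')
    have hgv : g v = 0 := by by_contra hc'; exact hvt (hg v hc')
    exact hv (by simp [hh2, hfv, hgv])
  have hq1 := hquad t h1 hh1s
  have hq2 := hquad t h2 hh2s
  set B : ℝ := ∑ v ∈ t, ∑ u ∈ t, w v u * f u * g v with hB
  have hpol : (∑ v ∈ t, ∑ u ∈ t, w v u * h1 u * h1 v)
      - (∑ v ∈ t, ∑ u ∈ t, w v u * h2 u * h2 v) = 4 * B := by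
    have hswap := hsymmB t f g
    rw [hB, ← Finset.sum_sub_distrib]
    have : ∀ v ∈ t, (∑ u ∈ t, w v u * h1 u * h1 v) - ∑ u ∈ t, w v u * h2 u * h2 v
        = ∑ u ∈ t, (2 * (w v u * f u * g v) + 2 * (w v u * g u * f v)) := by
      intro v _
      rw [← Finset.sum_sub_distrib]
      refine Finset.sum_congr rfl fun u _ => ?_
      simp only [hh1, hh2]
      field_simp
      ring
    rw [Finset.sum_congr rfl this]
    have e : ∑ v ∈ t, ∑ u ∈ t, (2 * (w v u * f u * g v) + 2 * (w v u * g u * f v))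
        = 2 * (∑ v ∈ t, ∑ u ∈ t, w v u * f u * g v)
          + 2 * (∑ v ∈ t, ∑ u ∈ t, w v u * g u * f v) := by
      simp only [Finset.sum_add_distrib, Finset.mul_sum]
    rw [e, ← hswap]
    ring
  have hN12 : (∑ v ∈ t, h1 v ^ 2 * d v) + (∑ v ∈ t, h2 v ^ 2 * d v)
      = 2 * x ^ 2 * Nf + 2 / x ^ 2 * Ng := by
    rw [hNf, hNg, Finset.mul_sum, Finset.mul_sum, ← Finset.sum_add_distrib,
      ← Finset.sum_add_distrib]
    refine Finset.sum_congr rfl fun v _ => ?_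
    simp only [hh1, hh2]
    field_simp
    ring
  have hmain : 4 * |B| ≤ c * (2 * x ^ 2 * Nf + 2 / x ^ 2 * Ng) := by
    have := abs_sub_abs_le_abs_sub (∑ v ∈ t, ∑ u ∈ t, w v u * h1 u * h1 v)
      (∑ v ∈ t, ∑ u ∈ t, w v u * h2 u * h2 v)
    have habs : |4 * B| ≤ |∑ v ∈ t, ∑ u ∈ t, w v u * h1 u * h1 v|
        + |∑ v ∈ t, ∑ u ∈ t, w v u * h2 u * h2 v| := by
      rw [← hpol]; exact abs_sub _ _
    rw [abs_mul, abs_of_nonneg (by norm_num : (0:ℝ) ≤ 4)] at habs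
    have hd1 : (0:ℝ) ≤ ∑ v ∈ t, h1 v ^ 2 * d v :=
      Finset.sum_nonneg fun v _ => mul_nonneg (sq_nonneg _) (hd0 v)
    calc 4 * |B| ≤ |∑ v ∈ t, ∑ u ∈ t, w v u * h1 u * h1 v|
          + |∑ v ∈ t, ∑ u ∈ t, w v u * h2 u * h2 v| := habs
      _ ≤ c * (∑ v ∈ t, h1 v ^ 2 * d v) + c * (∑ v ∈ t, h2 v ^ 2 * d v) := add_le_add hq1 hq2
      _ = c * ((∑ v ∈ t, h1 v ^ 2 * d v) + ∑ v ∈ t, h2 v ^ 2 * d v) := by ring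
      _ = c * (2 * x ^ 2 * Nf + 2 / x ^ 2 * Ng) := by rw [hN12]
  have hxval : 2 * x ^ 2 * Nf + 2 / x ^ 2 * Ng = 4 * sf * sg := by
    rw [hx2]
    have hNfv : Nf = sf ^ 2 := hsf2.symm
    have hNgv : Ng = sg ^ 2 := hsg2.symm
    rw [hNfv, hNgv]
    field_simp
    ring
  rw [hxval] at hmain
  calc |B| ≤ c * sf * sg := by linarith
    _ = c * (sf * sg) := by ring


set_option maxHeartbeats 1600000 in
theorem cheeger_norm_bound (w : V → V → ℝ)
    (hsymm : ∀ u v, w u v = w v u) (hnn : ∀ u v, 0 ≤ w u v)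
    (hsum : ∀ v, Summable (w v)) (hpos : ∀ v, 0 < vtxWeight w v)
    (i : ℝ) (hi0 : 0 < i) (hi1 : i ≤ 1)
    (hcheeger : ∀ S : Finset V, i * vol w S ≤ bdry w S) :
    (∀ f : V → ℝ, (Function.support f).Finite →
        ∑' v, (∑' u, markov w v u * f u) ^ 2 * vtxWeight w v ≤
          (1 - i ^ 2) * ∑' v, (f v) ^ 2 * vtxWeight w v) ∧
      Real.sqrt (1 - i ^ 2) ≤ 1 - i ^ 2 / 2 := by
  have h1i : (0:ℝ) ≤ 1 - i ^ 2 := by nlinarith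
  constructor
  · intro f hfin
    classical
    set c := Real.sqrt (1 - i ^ 2) with hcdef
    have hc : 0 ≤ c := Real.sqrt_nonneg _
    have hc2 : c ^ 2 = 1 - i ^ 2 := Real.sq_sqrt h1i
    set s := hfin.toFinset with hsdef
    have hsupp : ∀ v, f v ≠ 0 → v ∈ s := fun v hv =>
      hfin.mem_toFinset.2 (Function.mem_support.2 hv)
    have hfz : ∀ v, v ∉ s → f v = 0 := fun v hv => by
      by_contra hcontra; exact hv (hsupp v hcontra)
    have hd0 : ∀ v, (0:ℝ) ≤ vtxWeight w v := fun v => le_of_lt (hpos v)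
    -- auxiliary bilinear symmetry
    have hsymmB : ∀ (t : Finset V) (a b : V → ℝ),
        ∑ v ∈ t, ∑ u ∈ t, w v u * a u * b v = ∑ v ∈ t, ∑ u ∈ t, w v u * b u * a v := by
      intro t a b
      rw [Finset.sum_comm]
      refine Finset.sum_congr rfl fun v _ => Finset.sum_congr rfl fun u _ => ?_
      rw [hsymm u v]; ring
    have hquad : ∀ (t : Finset V) (h : V → ℝ), (∀ v, h v ≠ 0 → v ∈ t) →
        |∑ v ∈ t, ∑ u ∈ t, w v u * h u * h v| ≤ c * ∑ v ∈ t, h v ^ 2 * vtxWeight w v :=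
      fun t h ht => quad_bound w hsymm hnn hsum i hi0 hi1
        (coarea w hnn hsum i hcheeger) t h ht
    have hbil := bilinear_bound w hpos c hc hquad hsymmB
    set P : V → ℝ := fun v => ∑' u, markov w v u * f u with hPdef
    set N : ℝ := ∑ v ∈ s, f v ^ 2 * vtxWeight w v with hNdef
    have hN0 : 0 ≤ N := Finset.sum_nonneg fun v _ => mul_nonneg (sq_nonneg _) (hd0 v)
    have hPd : ∀ v, P v * vtxWeight w v = ∑ u ∈ s, w v u * f u := by
      intro v
      have e1 : ∀ u, markov w v u * f u = (w v u * f u) * (vtxWeight w v)⁻¹ := by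
        intro u; rw [markov, div_eq_mul_inv]; ring
      have e2 : ∑' u, w v u * f u = ∑ u ∈ s, w v u * f u :=
        tsum_eq_sum (fun u hu => by rw [hfz u hu, mul_zero])
      rw [hPdef]
      simp only
      rw [tsum_congr e1, tsum_mul_right, e2]
      field_simp
      rw [mul_div_assoc, div_self (ne_of_gt (hpos v)), mul_one]
    -- key partial-sum bound
    have key : ∀ F : Finset V, ∑ v ∈ F, P v ^ 2 * vtxWeight w v ≤ c ^ 2 * N := by
      intro F
      set t : Finset V := s ∪ F with htdef
      set gF : V → ℝ := fun v => if v ∈ F then P v else 0 with hgFdef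
      have hgFs : ∀ v, gF v ≠ 0 → v ∈ t := by
        intro v hv
        by_cases hvF : v ∈ F
        · exact Finset.mem_union_right _ hvF
        · exact absurd (by simp [hgFdef, hvF]) hv
      have hfs' : ∀ v, f v ≠ 0 → v ∈ t := fun v hv =>
        Finset.mem_union_left _ (hsupp v hv)
      have hB := hbil t f gF hfs' hgFs
      set Y : ℝ := ∑ v ∈ F, P v ^ 2 * vtxWeight w v with hYdef
      have hY0 : 0 ≤ Y := Finset.sum_nonneg fun v _ => mul_nonneg (sq_nonneg _) (hd0 v)
      have hBY : ∑ v ∈ t, ∑ u ∈ t, w v u * f u * gF v = Y := by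
        have hinner : ∀ v ∈ t, ∑ u ∈ t, w v u * f u * gF v
            = (P v * vtxWeight w v) * gF v := by
          intro v _
          rw [← Finset.sum_mul]
          congr 1
          rw [hPd v]
          exact (Finset.sum_subset Finset.subset_union_left
            (fun u _ hus => by rw [hfz u hus, mul_zero])).symm
        rw [Finset.sum_congr rfl hinner]
        rw [← Finset.sum_subset Finset.subset_union_right
          (fun v _ hvF => by rw [hgFdef]; simp [hvF])]
        rw [hYdef]
        refine Finset.sum_congr rfl fun v hv => ?_
        simp only [hgFdef, if_pos hv]; ring
      have hNgF : ∑ v ∈ t, gF v ^ 2 * vtxWeight w v = Y := by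
        rw [← Finset.sum_subset Finset.subset_union_right
          (fun v _ hvF => by rw [hgFdef]; simp [hvF])]
        rw [hYdef]
        refine Finset.sum_congr rfl fun v hv => ?_
        simp only [hgFdef, if_pos hv]
      have hNft : ∑ v ∈ t, f v ^ 2 * vtxWeight w v = N := by
        rw [← Finset.sum_subset Finset.subset_union_left
          (fun v _ hvs => by rw [hfz v hvs]; ring)]
      rw [hBY, hNgF, hNft] at hB
      -- Y ≤ |Y| ≤ c * (sqrt N * sqrt Y)
      have hYle : Y ≤ c * (Real.sqrt N * Real.sqrt Y) := (le_abs_self Y).trans hB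
      have hsY : Real.sqrt Y ^ 2 = Y := Real.sq_sqrt hY0
      have hsN : Real.sqrt N ^ 2 = N := Real.sq_sqrt hN0
      have hsY0 : 0 ≤ Real.sqrt Y := Real.sqrt_nonneg _
      have hsN0 : 0 ≤ Real.sqrt N := Real.sqrt_nonneg _
      rcases eq_or_lt_of_le hsY0 with hY0' | hYpos
      · have hYz : Y = 0 := by rw [← hsY, ← hY0']; ring
        rw [hYz]
        exact mul_nonneg (sq_nonneg c) hN0
      · have h1 : Real.sqrt Y * Real.sqrt Y ≤ (c * Real.sqrt N) * Real.sqrt Y := by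
          nlinarith
        have h2 : Real.sqrt Y ≤ c * Real.sqrt N := le_of_mul_le_mul_right h1 hYpos
        calc Y = Real.sqrt Y ^ 2 := hsY.symm
          _ ≤ (c * Real.sqrt N) ^ 2 := by nlinarith
          _ = c ^ 2 * N := by rw [mul_pow, hsN]
    have hnn2 : (0 : V → ℝ) ≤ fun v => P v ^ 2 * vtxWeight w v :=
      fun v => mul_nonneg (sq_nonneg _) (hd0 v)
    have hsummable : Summable (fun v => P v ^ 2 * vtxWeight w v) :=
      summable_of_sum_le hnn2 key
    have hfinal : ∑' v, P v ^ 2 * vtxWeight w v ≤ c ^ 2 * N :=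
      Summable.tsum_le_of_sum_le hsummable key
    have htsumN : ∑' v, f v ^ 2 * vtxWeight w v = N :=
      tsum_eq_sum (fun v hv => by rw [hfz v hv]; ring)
    rw [htsumN, ← hc2]
    exact hfinal
  · have h2 : (0:ℝ) ≤ 1 - i ^ 2 / 2 := by nlinarith
    calc Real.sqrt (1 - i ^ 2) ≤ Real.sqrt ((1 - i ^ 2 / 2) ^ 2) :=
        Real.sqrt_le_sqrt (by nlinarith)
      _ = 1 - i ^ 2 / 2 := Real.sqrt_sq h2
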